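/- Let (r,ρ) ∈ 𝒩𝒞. Then the map φ : {r,ρ}^ℕ × {r,ρ}^ℕ → (ℝ^ℕ)^ℕ defined by φ(a,c) = (K_1^{a,c}(1), K_2^{a,c}(1), K_3^{a,c}(1), …), where {r,ρ}^ℕ × {r,ρ}^ℕ carries the product topology of the discrete two-point space {r,ρ} and (ℝ^ℕ)^ℕ carries the product topology, is injective and continuous, and is a homeomorphism onto its image E = {φ(a,c) : a,c ∈ {r,ρ}^ℕ}. -/

import Mathlib

/-- `(r, ρ) ∈ 𝒩𝒞`: `0 < r < 1 < ρ` and `r^k = ρ^ℓ` only for `k = ℓ = 0`. -/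
def NC (r ρ : ℝ) : Prop :=
  0 < r ∧ r < 1 ∧ 1 < ρ ∧ ∀ k l : ℤ, r ^ k = ρ ^ l ↔ k = 0 ∧ l = 0

/-- The Mahavier product `M_{r,ρ} ⊆ [0,1]^ℕ`. -/
def Mset (r ρ : ℝ) : Set (ℕ → ℝ) :=
  {x | (∀ i, x i ∈ Set.Icc (0:ℝ) 1) ∧ ∀ i, x (i + 1) = r * x i ∨ x (i + 1) = ρ * x i}

/-- The shift map `σ_{r,ρ}` on `M_{r,ρ}`. -/
def shiftM (r ρ : ℝ) (x : Mset r ρ) : Mset r ρ :=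
  ⟨fun i => x.1 (i + 1), fun i => x.2.1 (i + 1), fun i => x.2.2 (i + 1)⟩

/-- For `a, c ∈ {r,ρ}^ℕ` and `t ∈ [0,1]`, `Kfun a c t` is the point whose `k`-th coordinate
sequence is `K_{k+1}^{a,c}(t) = (t/(c_k⋯c_1), …, t/c_1, t, a_1·t, a_2a_1·t, …)`. -/
noncomputable def Kfun (a c : ℕ → ℝ) (t : ℝ) : ℕ → ℕ → ℝ := fun k i =>
  if i < k then t / (∏ j ∈ Finset.range (k - i), c j)
  else (∏ j ∈ Finset.range (i - k), a j) * t

/-- The map `φ(a,c) = (K₁^{a,c}(1), K₂^{a,c}(1), …)` on `{r,ρ}^ℕ × {r,ρ}^ℕ`. -/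
noncomputable def phiMap (r ρ : ℝ) :
    (ℕ → ({r, ρ} : Set ℝ)) × (ℕ → ({r, ρ} : Set ℝ)) → ℕ → ℕ → ℝ :=
  fun p => Kfun (fun n => (p.1 n : ℝ)) (fun n => (p.2 n : ℝ)) 1

/-- The map `φ : {r,ρ}^ℕ × {r,ρ}^ℕ → (ℝ^ℕ)^ℕ`, `φ(a,c) = (K₁^{a,c}(1), K₂^{a,c}(1), …)`,
is injective and continuous, and it is a homeomorphism onto its image
`E = {φ(a,c) : a, c ∈ {r,ρ}^ℕ}`. -/
theorem stmt17 (r ρ : ℝ) (h : NC r ρ) :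
    Function.Injective (phiMap r ρ) ∧ Continuous (phiMap r ρ) ∧
      ∃ e : ((ℕ → ({r, ρ} : Set ℝ)) × (ℕ → ({r, ρ} : Set ℝ))) ≃ₜ Set.range (phiMap r ρ),
        ∀ p, (e p : ℕ → ℕ → ℝ) = phiMap r ρ p := by

  obtain ⟨hr, hr1, hrho, _⟩ := h
  have hrho0 : (0:ℝ) < ρ := lt_trans one_pos hrho
  have hmem : ∀ x : ({r, ρ} : Set ℝ), (0:ℝ) < (x : ℝ) := by
    rintro ⟨x, hx | hx⟩
    · subst hx; exact hr
    · rw [Set.mem_singleton_iff] at hx; subst hx; exact hrho0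
  have hinj : Function.Injective (phiMap r ρ) := by
    intro p q hpq
    have hA : ∀ k, (∏ j ∈ Finset.range k, (p.1 j : ℝ)) = ∏ j ∈ Finset.range k, (q.1 j : ℝ) := by
      intro k
      have h0 := congrFun (congrFun hpq 0) k
      simpa [phiMap, Kfun] using h0
    have hC : ∀ k, (∏ j ∈ Finset.range k, (p.2 j : ℝ)) = ∏ j ∈ Finset.range k, (q.2 j : ℝ) := by
      intro k
      cases k with
      | zero => simp
      | succ k =>
        have h0 := congrFun (congrFun hpq (k+1)) 0
        simp only [phiMap, Kfun, if_pos (Nat.succ_pos k), Nat.sub_zero, one_div] at h0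
        exact inv_injective h0
    have hAne : ∀ k, (∏ j ∈ Finset.range k, (p.1 j : ℝ)) ≠ 0 :=
      fun k => ne_of_gt (Finset.prod_pos fun j _ => hmem _)
    have hCne : ∀ k, (∏ j ∈ Finset.range k, (p.2 j : ℝ)) ≠ 0 :=
      fun k => ne_of_gt (Finset.prod_pos fun j _ => hmem _)
    have h1 : p.1 = q.1 := by
      funext n
      apply Subtype.ext
      have e1 := hA (n+1)
      rw [Finset.prod_range_succ, Finset.prod_range_succ, ← hA n] at e1
      exact mul_left_cancel₀ (hAne n) e1
    have h2 : p.2 = q.2 := by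
      funext n
      apply Subtype.ext
      have e1 := hC (n+1)
      rw [Finset.prod_range_succ, Finset.prod_range_succ, ← hC n] at e1
      exact mul_left_cancel₀ (hCne n) e1
    exact Prod.ext h1 h2
  have hcont : Continuous (phiMap r ρ) := by
    apply continuous_pi; intro k; apply continuous_pi; intro i
    simp only [phiMap, Kfun]
    by_cases hik : i < k
    · simp only [if_pos hik]
      apply Continuous.div continuous_const
      · exact continuous_finset_prod _ fun j _ =>
          continuous_subtype_val.comp ((continuous_apply j).comp continuous_snd)
      · intro p; exact ne_of_gt (Finset.prod_pos fun j _ => hmem _)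
    · simp only [if_neg hik]
      exact (continuous_finset_prod _ fun j _ =>
        continuous_subtype_val.comp ((continuous_apply j).comp continuous_fst)).mul continuous_const
  refine ⟨hinj, hcont, ?_⟩
  haveI : Finite ({r, ρ} : Set ℝ) := ((Set.finite_singleton ρ).insert r).to_subtype
  have hemb := (hcont.isClosedEmbedding hinj).toIsEmbedding
  exact ⟨hemb.toHomeomorph, fun p => rfl⟩
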